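/- arXiv:1104.4044 — 8 statements merged into one kernel-verified Lean document; each statement's English description precedes it below -/
import Mathlib

section
/- For a Boolean automata circuit of size n with all local functions equal to identity or negation, and parallel update function F, the set of unstable nodes is shifted by one under F: U(F(x)) = {i : i-1 mod n in U(x)}. Consequently the number of unstable nodes is invariant: u(x) = u(F^k(x)) for all k. -/
open Finset

/-- Set of unstable nodes of a Boolean automata circuit. -/
def U {n : ℕ} [NeZero n] (f : ZMod n → Bool → Bool) (x : ZMod n → Bool) :
    Finset (ZMod n) :=
  univ.filter (fun i => x i ≠ f i (x (i - 1)))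

/-- Parallel update of a Boolean automata circuit. -/
def Fpar {n : ℕ} (f : ZMod n → Bool → Bool) (x : ZMod n → Bool) :
    ZMod n → Bool :=
  fun i => f i (x (i - 1))

lemma shift_lemma (n : ℕ) [NeZero n] (f : ZMod n → Bool → Bool)
    (hf : ∀ i, f i = id ∨ f i = fun b => !b) (x : ZMod n → Bool) :
    U f (Fpar f x) = univ.filter (fun i => i - 1 ∈ U f x) := by
  ext i
  simp only [U, mem_filter, mem_univ, true_and]; simp only [Fpar]
  have hinj : Function.Injective (f i) := by
    rcases hf i with h | h <;> rw [h]
    · exact fun a b h => h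
    · intro a b hab; simpa using hab
  constructor
  · intro h h'
    exact h (congrArg (f i) h')
  · intro h h'
    exact h (hinj h')

/-- the unstable set is shifted by one under the parallel update,
and hence the number of unstable nodes is invariant under iterates of `F`. -/
theorem unstable_set_shifts_under_parallel_update
    (n : ℕ) [NeZero n] (f : ZMod n → Bool → Bool)
    (hf : ∀ i, f i = id ∨ f i = fun b => !b) (x : ZMod n → Bool) :
    U f (Fpar f x) = univ.filter (fun i => i - 1 ∈ U f x) ∧
    ∀ k : ℕ, (U f ((Fpar f)^[k] x)).card = (U f x).card := by
  refine ⟨shift_lemma n f hf x, ?_⟩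
  intro k
  induction k with
  | zero => rfl
  | succ k ih =>
    rw [Function.iterate_succ_apply', shift_lemma n f hf, ← ih]
    apply Finset.card_nbij' (fun i => i - 1) (fun i => i + 1)
    · intro i hi; simpa using (mem_filter.mp hi).2
    · intro i hi; simp only [mem_coe, mem_filter, mem_univ, true_and, add_sub_cancel_right]; exact hi
    · intro i _; exact sub_add_cancel i 1
    · intro i _; exact add_sub_cancel_right i 1
end

section
/- Let C be a Boolean automata circuit of size n. If C is positive (the number of indices i with f_i = neg is even), then u(x) is even for every configuration x in {0,1}^n; if C is negative (that number is odd), then u(x) is odd for every configuration x. -/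
open Finset

lemma card_filter_cast {n : ℕ} [NeZero n] (p : ZMod n → Prop) [DecidablePred p] :
    (((univ.filter p).card : ZMod 2)) = ∑ i : ZMod n, if p i then (1 : ZMod 2) else 0 := by
  rw [Finset.card_filter, Nat.cast_sum]
  simp

lemma key (n : ℕ) [NeZero n] (f : ZMod n → Bool → Bool)
    (hf : ∀ i, f i = id ∨ f i = fun b => !b) (x : ZMod n → Bool) :
    ((U f x).card : ZMod 2)
      = ((univ.filter (fun i : ZMod n => f i = fun b => !b)).card : ZMod 2) := by
  rw [U, card_filter_cast, card_filter_cast]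
  have hpt : ∀ i : ZMod n,
      (if x i ≠ f i (x (i-1)) then (1:ZMod 2) else 0)
        = (if x i ≠ x (i-1) then (1:ZMod 2) else 0)
          + (if f i = (fun b => !b) then (1:ZMod 2) else 0) := by
    intro i
    rcases hf i with h | h
    · have hne : f i ≠ (fun b => !b) := by
        rw [h]; intro hc
        have := congrFun hc true
        simp at this
      simp only [h, hne, if_false]
      have : ¬ id = (fun b => !b) := by decide
      simp [this]
    · rw [h, if_pos rfl]
      rcases Bool.eq_false_or_eq_true (x i) with h1 | h1 <;>
        rcases Bool.eq_false_or_eq_true (x (i-1)) with h2 | h2 <;>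
          simp [h1, h2] <;> decide
  rw [Finset.sum_congr rfl (fun i _ => hpt i), Finset.sum_add_distrib]
  have hshift : ∑ i : ZMod n, (if x i ≠ x (i-1) then (1:ZMod 2) else 0) = 0 := by
    have hpt2 : ∀ i : ZMod n, (if x i ≠ x (i-1) then (1:ZMod 2) else 0)
        = (if x i then (1:ZMod 2) else 0) + (if x (i-1) then (1:ZMod 2) else 0) := by
      intro i
      rcases Bool.eq_false_or_eq_true (x i) with h1 | h1 <;>
        rcases Bool.eq_false_or_eq_true (x (i-1)) with h2 | h2 <;>
          simp [h1, h2] <;> decide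
    rw [Finset.sum_congr rfl (fun i _ => hpt2 i), Finset.sum_add_distrib]
    have heq : ∑ i : ZMod n, (if x (i-1) then (1:ZMod 2) else 0)
        = ∑ i : ZMod n, (if x i then (1:ZMod 2) else 0) :=
      Fintype.sum_equiv (Equiv.subRight (1 : ZMod n)) _ _ (fun i => rfl)
    rw [heq, ← two_mul]
    have : (2 : ZMod 2) = 0 := by decide
    rw [this, zero_mul]
  rw [hshift, zero_add]

/-- in a positive circuit `u x` is even for every configuration;
in a negative circuit `u x` is odd for every configuration. -/
theorem parity_of_unstable_count
    (n : ℕ) [NeZero n] (f : ZMod n → Bool → Bool)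
    (hf : ∀ i, f i = id ∨ f i = fun b => !b) (x : ZMod n → Bool) :
    (Even (univ.filter (fun i : ZMod n => f i = fun b => !b)).card →
      Even (U f x).card) ∧
    (Odd (univ.filter (fun i : ZMod n => f i = fun b => !b)).card →
      Odd (U f x).card) := by
  have h := key n f hf x
  rw [ZMod.natCast_eq_natCast_iff] at h
  have hmod : (U f x).card % 2 = (univ.filter (fun i : ZMod n => f i = fun b => !b)).card % 2 := h
  constructor
  · intro he
    rw [Nat.even_iff] at he ⊢
    omega
  · intro ho
    rw [Nat.odd_iff] at ho ⊢
    omega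
end

section
/- For a Boolean automata circuit of size n and any k between 0 and n, the number of configurations x in {0,1}^n with u(x) = k is exactly 2 * binom(n, k), provided k has the same parity as the number of negative local functions (otherwise it is 0). -/
open Finset

namespace AuxBAC
set_option linter.unusedSectionVars false
variable {n : ℕ} [NeZero n]

lemma mem_U {f : ZMod n → Bool → Bool} {x : ZMod n → Bool} {i : ZMod n} :
    i ∈ U f x ↔ x i ≠ f i (x (i - 1)) := by simp [U]

lemma f_eq {f : ZMod n → Bool → Bool} (hf : ∀ i, f i = id ∨ f i = fun b => !b)
    (i : ZMod n) (b : Bool) : f i b = xor b (!(f i true)) := by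
  rcases hf i with h | h <;> rw [h] <;> cases b <;> rfl

lemma boolz : ∀ (a c : ZMod 2) (d : Bool),
    ((decide (a = 1) ≠ xor (decide (c = 1)) d) ↔ a ≠ c + (d.toNat : ZMod 2)) := by decide

lemma add2 : ∀ a b : ZMod 2, a + b = 0 → b = a := by decide

lemma sum_zmod (g : ZMod n → ZMod 2) :
    ∑ i : ZMod n, g i = ∑ j ∈ range n, g (j : ZMod n) := by
  refine Finset.sum_nbij' (fun a => a.val) (fun j => (j : ZMod n)) ?_ ?_ ?_ ?_ ?_
  · intro a _; exact Finset.mem_range.mpr (ZMod.val_lt a)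
  · intro a _; exact Finset.mem_univ _
  · intro a _; exact ZMod.natCast_rightInverse a
  · intro a ha; exact ZMod.val_cast_of_lt (Finset.mem_range.mp ha)
  · intro a _; rw [ZMod.natCast_rightInverse a]

lemma range_split (m : ℕ) (g : ℕ → ZMod 2) :
    ∑ j ∈ range (m + 1), g j = g 0 + ∑ j ∈ Finset.Icc 1 m, g j := by
  induction m with
  | zero => simp
  | succ m ih =>
    rw [Finset.sum_range_succ, ih, Finset.sum_Icc_succ_top (Nat.le_add_left 1 m)]
    ring

lemma exists_config {f : ZMod n → Bool → Bool} (hf : ∀ i, f i = id ∨ f i = fun b => !b)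
    (b : Bool) (S : Finset (ZMod n))
    (hpar : (S.card : ZMod 2)
      = (((univ.filter fun i : ZMod n => f i = fun b => !b)).card : ZMod 2)) :
    ∃ x : ZMod n → Bool, x 0 = b ∧ U f x = S := by
  set T : ℕ → ZMod 2 := fun j =>
    (if ((j : ZMod n)) ∈ S then 1 else 0) + ((!(f (j : ZMod n) true)).toNat : ZMod 2) with hT
  set Y : ℕ → ZMod 2 := fun m => ((b.toNat : ZMod 2)) + ∑ j ∈ Finset.Icc 1 m, T j with hY
  set x : ZMod n → Bool := fun i => decide (Y i.val = 1) with hx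
  -- total sum is zero
  have htot : ∑ j ∈ range n, T j = 0 := by
    rw [← sum_zmod (fun i => (if i ∈ S then 1 else 0) + ((!(f i true)).toNat : ZMod 2))]
    rw [Finset.sum_add_distrib]
    have h1 : (∑ i : ZMod n, (if i ∈ S then (1 : ZMod 2) else 0)) = (S.card : ZMod 2) := by
      rw [Finset.sum_ite_mem, Finset.univ_inter, Finset.sum_const, nsmul_eq_mul, mul_one]
    have h2 : (∑ i : ZMod n, ((!(f i true)).toNat : ZMod 2))
        = (((univ.filter fun i : ZMod n => f i = fun b => !b)).card : ZMod 2) := by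
      rw [card_filter, Nat.cast_sum]
      refine Finset.sum_congr rfl (fun i _ => ?_)
      rcases hf i with h | h <;> rw [h] <;> decide
    rw [h1, h2, hpar]
    rw [← two_mul]
    have : (2 : ZMod 2) = 0 := rfl
    rw [this, zero_mul]
  have z2 : ∀ y e ind : ZMod 2, (y + (ind + e) ≠ y + e ↔ ind ≠ 0) := by decide
  have z3 : ∀ a b c : ZMod 2, (a + c) + b = 0 → b + c = a := by decide
  have z4 : ∀ y ind : ZMod 2, (y ≠ y + ind ↔ ind ≠ 0) := by decide
  refine ⟨x, ?_, ?_⟩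
  · show decide (Y (0 : ZMod n).val = 1) = b
    rw [ZMod.val_zero]
    have hY0 : Y 0 = (b.toNat : ZMod 2) := by simp [hY]
    rw [hY0]; cases b <;> decide
  · ext i
    rw [mem_U]
    have hxi : ∀ j : ZMod n, x j = decide (Y j.val = 1) := fun j => rfl
    rw [f_eq hf, hxi, hxi, boolz]
    by_cases h0 : i = 0
    · subst h0
      rw [ZMod.val_zero]
      have hn : 1 ≤ n := Nat.one_le_iff_ne_zero.mpr (NeZero.ne n)
      have hneg : ((0 : ZMod n) - 1).val = n - 1 := by
        have h1 : (0 : ZMod n) - 1 = ((n - 1 : ℕ) : ZMod n) := by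
          rw [Nat.cast_sub hn, ZMod.natCast_self, Nat.cast_one]
        rw [h1, ZMod.val_cast_of_lt (by omega)]
      rw [hneg]
      have hsplit : T 0 + ∑ j ∈ Finset.Icc 1 (n - 1), T j = 0 := by
        have h := range_split (n - 1) T
        rw [← h, show n - 1 + 1 = n by omega]
        exact htot
      have hT0 : T 0 = (if (0 : ZMod n) ∈ S then 1 else 0)
          + ((!(f 0 true)).toNat : ZMod 2) := by
        rw [hT]; norm_num
      rw [hT0] at hsplit
      have hkey := z3 _ _ _ hsplit
      have hYn : Y (n - 1) = (b.toNat : ZMod 2) + ∑ j ∈ Finset.Icc 1 (n - 1), T j := rfl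
      have hY0 : Y 0 = (b.toNat : ZMod 2) := by simp [hY]
      rw [hY0, hYn, add_assoc, hkey, z4]
      by_cases hi : (0 : ZMod n) ∈ S <;> simp [hi]
    · have hv0 : i.val ≠ 0 := fun h => h0 ((ZMod.val_eq_zero i).mp h)
      obtain ⟨m, hm0⟩ := Nat.exists_eq_succ_of_ne_zero hv0
      have hm : i.val = m + 1 := hm0
      have hmlt : m + 1 < n := by have := ZMod.val_lt i; omega
      have him : ((m + 1 : ℕ) : ZMod n) = i := by
        rw [← hm]; exact ZMod.natCast_rightInverse i
      have hsub : (i - 1).val = m := by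
        have h1 : i - 1 = (m : ZMod n) := by rw [← him]; push_cast; ring
        rw [h1, ZMod.val_cast_of_lt (by omega)]
      rw [hm, hsub]
      have hstep : Y (m + 1) = Y m + T (m + 1) := by
        show (b.toNat : ZMod 2) + ∑ j ∈ Finset.Icc 1 (m + 1), T j = _
        rw [Finset.sum_Icc_succ_top (by omega : 1 ≤ m + 1)]
        show _ = ((b.toNat : ZMod 2) + ∑ j ∈ Finset.Icc 1 m, T j) + T (m + 1)
        ring
      have hTm : T (m + 1) = (if i ∈ S then 1 else 0)
          + ((!(f i true)).toNat : ZMod 2) := by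
        rw [hT]; simp only; rw [him]
      rw [hstep, hTm, z2]
      by_cases hi : i ∈ S <;> simp [hi]

lemma parity {f : ZMod n → Bool → Bool} (hf : ∀ i, f i = id ∨ f i = fun b => !b)
    (x : ZMod n → Bool) :
    ((U f x).card : ZMod 2)
      = (((univ.filter fun i : ZMod n => f i = fun b => !b)).card : ZMod 2) := by
  rw [U, card_filter, card_filter, Nat.cast_sum, Nat.cast_sum]
  have h1 : ∀ i : ZMod n,
      ((if x i ≠ f i (x (i-1)) then 1 else 0 : ℕ) : ZMod 2)
        = (((x i).toNat : ZMod 2) + ((x (i-1)).toNat : ZMod 2))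
          + ((!(f i true)).toNat : ZMod 2) := by
    intro i
    rcases hf i with h | h <;> rw [h] <;> cases hx : x i <;> cases hy : x (i-1) <;> decide
  rw [Finset.sum_congr rfl (fun i _ => h1 i), Finset.sum_add_distrib, Finset.sum_add_distrib]
  have h2 : (∑ i : ZMod n, (((x (i-1)).toNat : ZMod 2)))
      = ∑ i : ZMod n, ((x i).toNat : ZMod 2) :=
    Fintype.sum_equiv (Equiv.subRight 1) _ _ (fun i => rfl)
  rw [h2]
  have h3 : ∀ a : ZMod 2, a + a = 0 := by decide
  rw [h3, zero_add]
  refine Finset.sum_congr rfl (fun i _ => ?_)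
  rcases hf i with h | h <;> rw [h] <;> decide


lemma inj {f : ZMod n → Bool → Bool} {x y : ZMod n → Bool}
    (h0 : x 0 = y 0) (hU : U f x = U f y) : x = y := by
  have key : ∀ m : ℕ, x (m : ZMod n) = y (m : ZMod n) := by
    intro m
    induction m with
    | zero => simpa using h0
    | succ m ih =>
      set i : ZMod n := ((m + 1 : ℕ) : ZMod n) with hi
      have hsub : i - 1 = (m : ZMod n) := by push_cast [hi]; ring
      have hiff : (x i ≠ f i (x (i - 1))) ↔ (y i ≠ f i (y (i - 1))) := by
        rw [← mem_U, ← mem_U, hU]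
      rw [hsub, ih] at hiff
      by_contra hne
      cases hx : x i <;> cases hy' : y i <;> simp [hx, hy'] at hne hiff
  funext i
  have h : ((i.val : ℕ) : ZMod n) = i := ZMod.natCast_rightInverse i
  rw [← h]; exact key i.val

end AuxBAC


/-- the number of configurations with `u x = k` is `2 * choose n k`
when `k` has the parity of the number of negative local functions, else `0`. -/
theorem card_configurations_with_given_unstable_count
    (n k : ℕ) [NeZero n] (hk : k ≤ n) (f : ZMod n → Bool → Bool)
    (hf : ∀ i, f i = id ∨ f i = fun b => !b) :
    (univ.filter (fun x : ZMod n → Bool => (U f x).card = k)).card =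
      if k % 2 = (univ.filter (fun i : ZMod n => f i = fun b => !b)).card % 2
      then 2 * Nat.choose n k else 0 := by
  by_cases hpar : k % 2 = (univ.filter (fun i : ZMod n => f i = fun b => !b)).card % 2
  · rw [if_pos hpar]
    have hcast : (k : ZMod 2)
        = (((univ.filter (fun i : ZMod n => f i = fun b => !b))).card : ZMod 2) :=
      (ZMod.natCast_eq_natCast_iff' _ _ _).mpr hpar
    have hbij := Finset.card_bij
      (s := univ.filter (fun x : ZMod n → Bool => (U f x).card = k))
      (t := (univ : Finset Bool) ×ˢ Finset.powersetCard k (univ : Finset (ZMod n)))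
      (fun x _ => (x 0, U f x))
      (by
        intro x hx
        rw [Finset.mem_filter] at hx
        exact Finset.mem_product.mpr ⟨Finset.mem_univ _,
          Finset.mem_powersetCard.mpr ⟨Finset.subset_univ _, hx.2⟩⟩)
      (by
        intro x hx y hy hxy
        rw [Prod.mk.injEq] at hxy
        exact AuxBAC.inj hxy.1 hxy.2)
      (by
        rintro ⟨b, S⟩ hbS
        rw [Finset.mem_product, Finset.mem_powersetCard] at hbS
        obtain ⟨x, hx0, hxU⟩ := AuxBAC.exists_config hf b S
          (by rw [hbS.2.2, hcast])
        refine ⟨x, ?_, ?_⟩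
        · rw [Finset.mem_filter]
          exact ⟨Finset.mem_univ _, by rw [hxU, hbS.2.2]⟩
        · simp only [Prod.mk.injEq]; exact ⟨hx0, hxU⟩)
    rw [hbij, Finset.card_product, Finset.card_univ, Fintype.card_bool,
      Finset.card_powersetCard, Finset.card_univ, ZMod.card]
  · rw [if_neg hpar]
    rw [Finset.card_eq_zero, Finset.filter_eq_empty_iff]
    intro x _ hx
    apply hpar
    have h := AuxBAC.parity hf x
    rw [hx] at h
    exact (ZMod.natCast_eq_natCast_iff' _ _ _).mp h
end

section
/- If C and C' are two Boolean automata circuits of the same size n and the same sign (both positive or both negative), then there is a bijection sigma : {0,1}^n -> {0,1}^n such that for every configuration x and every subset P of nodes, sigma(F_C^P(x)) = G^P(sigma(x)), where F_C^P and G^P are the partial update functions of C and C' respectively. Consequently their general iteration graphs are isomorphic. -/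
open Finset

/-- Partial update of a Boolean automata circuit with respect to a subset `P`. -/
def FP {n : ℕ} (f : ZMod n → Bool → Bool) (P : Finset (ZMod n))
    (x : ZMod n → Bool) : ZMod n → Bool :=
  fun i => if i ∈ P then f i (x (i - 1)) else x i

/-- Cumulative xor of `ε (1), ε (2), ..., ε (m)` (indices taken mod `n`). -/
def dAux {n : ℕ} (ε : ZMod n → Bool) : ℕ → Bool
  | 0 => false
  | k + 1 => xor (dAux ε k) (ε ((k + 1 : ℕ) : ZMod n))

lemma dAux_succ {n : ℕ} (ε : ZMod n → Bool) (k : ℕ) :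
    dAux ε (k + 1) = xor (dAux ε k) (ε ((k + 1 : ℕ) : ZMod n)) := rfl

lemma dAux_sum {n : ℕ} (ε : ZMod n → Bool) (m : ℕ) :
    (if dAux ε m then (1 : ZMod 2) else 0) =
      ∑ k ∈ Finset.range m, (if ε ((k + 1 : ℕ) : ZMod n) then (1 : ZMod 2) else 0) := by
  induction m with
  | zero => simp [dAux]
  | succ k ih =>
    rw [Finset.sum_range_succ, ← ih]
    show (if xor (dAux ε k) (ε ((k + 1 : ℕ) : ZMod n)) then (1 : ZMod 2) else 0) = _
    cases dAux ε k <;> cases ε ((k + 1 : ℕ) : ZMod n) <;> decide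

/-- two circuits of the same size and sign have isomorphic general
iteration graphs, via a bijection commuting with every partial update. -/
theorem same_sign_circuits_isomorphic_iteration_graphs
    (n : ℕ) [NeZero n] (f g : ZMod n → Bool → Bool)
    (hf : ∀ i, f i = id ∨ f i = fun b => !b)
    (hg : ∀ i, g i = id ∨ g i = fun b => !b)
    (hsign : Even (univ.filter (fun i : ZMod n => f i = fun b => !b)).card ↔
             Even (univ.filter (fun i : ZMod n => g i = fun b => !b)).card) :
    ∃ σ : (ZMod n → Bool) ≃ (ZMod n → Bool),
      ∀ (x : ZMod n → Bool) (P : Finset (ZMod n)),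
        σ (FP f P x) = FP g P (σ x) := by
  classical
  have hn : 0 < n := Nat.pos_of_ne_zero (NeZero.ne n)
  -- f and g act by xor with their value at false
  have hfx : ∀ i b, f i b = xor b (f i false) := by
    intro i b
    rcases hf i with h | h <;> rw [h] <;> cases b <;> rfl
  have hgx : ∀ i b, g i b = xor b (g i false) := by
    intro i b
    rcases hg i with h | h <;> rw [h] <;> cases b <;> rfl
  set ε : ZMod n → Bool := fun i => xor (f i false) (g i false) with hεdef
  -- the filter sets correspond to `f i false = true`
  have hfset : (univ.filter (fun i : ZMod n => f i = fun b => !b)) =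
      (univ.filter (fun i : ZMod n => f i false = true)) := by
    apply Finset.filter_congr
    intro i _
    rcases hf i with h | h <;> simp [h]
    · intro hid
      have := congrFun hid true
      simp at this
  have hgset : (univ.filter (fun i : ZMod n => g i = fun b => !b)) =
      (univ.filter (fun i : ZMod n => g i false = true)) := by
    apply Finset.filter_congr
    intro i _
    rcases hg i with h | h <;> simp [h]
    · intro hid
      have := congrFun hid true
      simp at this
  -- equality of the two cards mod 2
  have hcard : ((univ.filter (fun i : ZMod n => f i false = true)).card : ZMod 2) =
      ((univ.filter (fun i : ZMod n => g i false = true)).card : ZMod 2) := by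
    rw [ZMod.natCast_eq_natCast_iff']
    rw [hfset, hgset] at hsign
    have h1 := (univ.filter (fun i : ZMod n => f i false = true)).card
    rw [Nat.even_iff, Nat.even_iff] at hsign
    omega
  -- total xor of ε over all indices is even
  have hsum : (∑ i : ZMod n, (if ε i then (1 : ZMod 2) else 0)) = 0 := by
    have hsplit : ∀ i : ZMod n, (if ε i then (1 : ZMod 2) else 0) =
        (if f i false = true then (1 : ZMod 2) else 0) +
        (if g i false = true then (1 : ZMod 2) else 0) := by
      intro i
      simp only [hεdef]
      cases hfi : f i false <;> cases hgi : g i false <;> simp <;> decide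
    rw [Finset.sum_congr rfl (fun i _ => hsplit i), Finset.sum_add_distrib,
      Finset.sum_boole, Finset.sum_boole]
    push_cast
    rw [hcard, CharTwo.add_self_eq_zero]
  -- dAux ε n = false
  have hdn : dAux ε n = false := by
    have h1 : (if dAux ε n then (1 : ZMod 2) else 0) = 0 := by
      rw [dAux_sum]
      have hre : ∑ k ∈ Finset.range n, (if ε ((k + 1 : ℕ) : ZMod n) then (1 : ZMod 2) else 0)
          = ∑ i : ZMod n, (if ε (i + 1) then (1 : ZMod 2) else 0) := by
        apply Finset.sum_nbij' (fun k => ((k : ℕ) : ZMod n)) (fun i => i.val)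
        · intro a _; exact Finset.mem_univ _
        · intro a _; exact Finset.mem_range.mpr (ZMod.val_lt a)
        · intro a ha; exact ZMod.val_cast_of_lt (Finset.mem_range.mp ha)
        · intro a _; exact ZMod.natCast_rightInverse a
        · intro a _; push_cast; ring_nf
      rw [hre]
      rw [Fintype.sum_equiv (Equiv.addRight (1 : ZMod n))
        (fun i => if ε (i + 1) then (1 : ZMod 2) else 0)
        (fun i => if ε i then (1 : ZMod 2) else 0) (fun i => rfl)]
      exact hsum
    cases h : dAux ε n
    · rfl
    · rw [h] at h1; simp at h1
  set c : ZMod n → Bool := fun i => dAux ε i.val with hcdef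
  -- key recurrence
  have hrec : ∀ i : ZMod n, c i = xor (c (i - 1)) (ε i) := by
    intro i
    by_cases hi : i = 0
    · subst hi
      have hneg : ((0 : ZMod n) - 1) = (((n - 1 : ℕ)) : ZMod n) := by
        rw [Nat.cast_sub hn, ZMod.natCast_self]
        simp
      have hval : (((n - 1 : ℕ)) : ZMod n).val = n - 1 :=
        ZMod.val_cast_of_lt (by omega)
      have hdd : dAux ε n = xor (dAux ε (n - 1)) (ε ((n : ℕ) : ZMod n)) := by
        have h := dAux_succ ε (n - 1)
        rwa [show n - 1 + 1 = n by omega] at h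
      simp only [hcdef, hneg, hval, ZMod.val_zero, dAux]
      rw [ZMod.natCast_self] at hdd
      rw [← hdd, hdn]
    · have hv : i.val ≠ 0 := fun h => hi (by
        have := ZMod.natCast_rightInverse i
        rw [← this, h]; simp)
      have hv1 : 1 ≤ i.val := Nat.one_le_iff_ne_zero.mpr hv
      have hsub : (i - 1 : ZMod n) = ((i.val - 1 : ℕ) : ZMod n) := by
        rw [Nat.cast_sub hv1, ZMod.natCast_rightInverse i]
        simp
      have hval : ((i.val - 1 : ℕ) : ZMod n).val = i.val - 1 :=
        ZMod.val_cast_of_lt (by have := ZMod.val_lt i; omega)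
      have hdd : dAux ε i.val = xor (dAux ε (i.val - 1)) (ε ((i.val : ℕ) : ZMod n)) := by
        have h := dAux_succ ε (i.val - 1)
        rwa [show i.val - 1 + 1 = i.val by omega] at h
      simp only [hcdef, hsub, hval]
      rw [hdd, ZMod.natCast_rightInverse i]
  -- the bijection
  have hinv : Function.Involutive (fun x : ZMod n → Bool => fun i => xor (x i) (c i)) := by
    intro x; funext i; simp
  refine ⟨hinv.toPerm _, ?_⟩
  intro x P
  funext i
  show xor (FP f P x i) (c i) = FP g P (fun j => xor (x j) (c j)) i
  unfold FP
  by_cases hP : i ∈ P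
  · simp only [hP, if_pos]
    rw [hfx i, hgx i, hrec i]
    simp only [hεdef]
    cases x (i - 1) <;> cases f i false <;> cases g i false <;> cases c (i - 1) <;> rfl
  · simp [hP]
end

section
/- Let C be the canonical positive Boolean automata circuit of size n. For any configurations x, y with u(x) > u(y), y is reachable from x in the general iteration graph: there is a finite sequence of subset updates transforming x into y. -/
open Finset

/-- Partial update of the canonical positive circuit. -/
def FPc {n : ℕ} (P : Finset (ZMod n)) (x : ZMod n → Bool) : ZMod n → Bool :=
  fun i => if i ∈ P then x (i - 1) else x i

/-- Number of unstable nodes in the canonical positive circuit. -/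
def uc {n : ℕ} [NeZero n] (x : ZMod n → Bool) : ℕ :=
  (univ.filter (fun i : ZMod n => x i ≠ x (i - 1))).card

/-- One step of the general iteration graph. -/
def step {n : ℕ} (x y : ZMod n → Bool) : Prop :=
  ∃ P : Finset (ZMod n), P.Nonempty ∧ y = FPc P x

section Aux
variable {n : ℕ}

lemma step_update (z : ZMod n → Bool) (i : ZMod n) :
    step z (Function.update z i (z (i - 1))) := by
  refine ⟨{i}, singleton_nonempty i, ?_⟩
  funext j
  by_cases h : j = i <;> simp [FPc, Function.update, h]

lemma cast_nat_inj [NeZero n] {a b : ℕ} (ha : a < n) (hb : b < n) (h : (a : ZMod n) = b) : a = b := by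
  have h2 := congrArg ZMod.val h
  rwa [ZMod.val_cast_of_lt ha, ZMod.val_cast_of_lt hb] at h2

lemma pos_inj [NeZero n] {s : ZMod n} {a b : ℕ} (ha : a < n) (hb : b < n)
    (h : s - (a : ZMod n) = s - (b : ZMod n)) : a = b :=
  cast_nat_inj ha hb (sub_right_inj.mp h)

lemma pos_succ (s : ZMod n) (t : ℕ) :
    s - (t : ZMod n) - 1 = s - ((t + 1 : ℕ) : ZMod n) := by
  push_cast
  ring

def zEquiv (n : ℕ) [NeZero n] : Fin n ≃ ZMod n where
  toFun t := ((t : ℕ) : ZMod n)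
  invFun i := ⟨i.val, ZMod.val_lt i⟩
  left_inv t := by ext; simp [ZMod.val_cast_of_lt t.isLt]
  right_inv i := ZMod.natCast_rightInverse i

def cnt [NeZero n] (s : ZMod n) (k : ℕ) (z : ZMod n → Bool) : ℕ :=
  ∑ t ∈ Finset.Ico k (n - 1),
    (if z (s - (t : ZMod n)) = z (s - ((t + 1 : ℕ) : ZMod n)) then 0 else 1)

lemma uc_eq [NeZero n] (s : ZMod n) (z : ZMod n → Bool) :
    uc z = cnt s 0 z + (if z (s + 1) = z s then 0 else 1) := by
  have hn : 0 < n := Nat.pos_of_ne_zero (NeZero.ne n)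
  have h1 : uc z = ∑ i : ZMod n, (if z i = z (i - 1) then 0 else 1) := by
    rw [uc, Finset.card_filter]
    exact Finset.sum_congr rfl fun i _ => by by_cases h : z i = z (i - 1) <;> simp [h]
  have h2 : ∑ i : ZMod n, (if z i = z (i - 1) then 0 else 1)
      = ∑ t ∈ Finset.range n, (if z (s - (t : ZMod n)) = z (s - ((t + 1 : ℕ) : ZMod n)) then 0 else 1) := by
    rw [← Fin.sum_univ_eq_sum_range (fun t : ℕ => (if z (s - (t : ZMod n)) = z (s - ((t + 1 : ℕ) : ZMod n)) then 0 else 1)) n]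
    refine (Fintype.sum_equiv ((zEquiv n).trans (Equiv.subLeft s)) _ _ fun t => ?_).symm
    rw [show ((zEquiv n).trans (Equiv.subLeft s)) t = s - ((t : ℕ) : ZMod n) from rfl, pos_succ]
  have h3 : n = (n - 1) + 1 := (Nat.succ_pred_eq_of_pos hn).symm
  have hcast : ((n - 1 : ℕ) : ZMod n) = -1 := by
    have : (((n - 1 : ℕ) + 1 : ℕ) : ZMod n) = 0 := by
      rw [← h3]; exact ZMod.natCast_self n
    push_cast at this
    exact eq_neg_of_add_eq_zero_left this
  have h4 : s - ((n - 1 : ℕ) : ZMod n) = s + 1 := by rw [hcast, sub_neg_eq_add]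
  have h5 : s - ((n : ℕ) : ZMod n) = s := by simp
  have h6 := Finset.sum_range_succ
    (fun t : ℕ => (if z (s - (t : ZMod n)) = z (s - ((t + 1 : ℕ) : ZMod n)) then 0 else 1)) (n - 1)
  rw [← h3] at h6
  rw [h1, h2, h6, h4, h5, cnt, Finset.range_eq_Ico]
end Aux

lemma pull [NeZero n] (s : ZMod n) (v : Bool) :
    ∀ d k, k + d ≤ n - 1 → ∀ z : ZMod n → Bool, z (s - ((k + d : ℕ) : ZMod n)) = v →
      ∃ z', Relation.ReflTransGen step z z' ∧
        (∀ m : ℕ, k ≤ m → m ≤ k + d → z' (s - (m : ZMod n)) = v) ∧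
        (∀ i : ZMod n, (∀ m : ℕ, k ≤ m → m < k + d → i ≠ s - (m : ZMod n)) → z' i = z i) := by
  have hn : 0 < n := Nat.pos_of_ne_zero (NeZero.ne n)
  intro d
  induction d with
  | zero =>
    intro k _ z hz
    refine ⟨z, Relation.ReflTransGen.refl, fun m h1 h2 => ?_, fun i _ => rfl⟩
    have : m = k := by omega
    subst this
    simpa using hz
  | succ d ih =>
    intro k hk z hz
    have hjn : k + d < n := by omega
    have hj1n : k + d + 1 < n := by omega
    set z₁ := Function.update z (s - ((k + d : ℕ) : ZMod n)) v with hz₁def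
    have hstep : step z z₁ := by
      have h := step_update z (s - ((k + d : ℕ) : ZMod n))
      rw [pos_succ] at h
      rw [show ((k + d : ℕ) + 1 : ℕ) = (k + d + 1 : ℕ) from rfl] at h
      rwa [show (k + d + 1 : ℕ) = (k + (d + 1) : ℕ) from by omega, hz] at h
    have hz₁ : z₁ (s - ((k + d : ℕ) : ZMod n)) = v := Function.update_self _ _ _
    obtain ⟨z', hre, hset, hold⟩ := ih k (by omega) z₁ hz₁
    refine ⟨z', Relation.ReflTransGen.head hstep hre, ?_, ?_⟩
    · intro m h1 h2
      rcases Nat.lt_or_ge m (k + d + 1) with hm | hm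
      · exact hset m h1 (by omega)
      · have hne : ∀ m' : ℕ, k ≤ m' → m' < k + d → s - (m : ZMod n) ≠ s - (m' : ZMod n) := by
          intro m' _ h2' hcon
          have := pos_inj (by omega) (by omega) hcon
          omega
        rw [hold _ hne, hz₁def]
        have hne2 : s - (m : ZMod n) ≠ s - ((k + d : ℕ) : ZMod n) := by
          intro hcon
          have := pos_inj (by omega) (by omega) hcon
          omega
        rw [Function.update_of_ne hne2]
        have hmeq : m = k + (d + 1) := by omega
        rw [hmeq]
        exact hz
    · intro i hi
      have h1 : z' i = z₁ i := hold i fun m hm1 hm2 => hi m hm1 (by omega)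
      have h2 : z₁ i = z i := Function.update_of_ne (hi (k + d) (by omega) (by omega)) _ _
      rw [h1, h2]

lemma bool_ne {a b : Bool} (h : a ≠ b) : a = !b := by
  cases a <;> cases b <;> simp_all

/-- parity of the boundary count on a suffix equals the endpoint comparison -/
lemma parity [NeZero n] (s : ZMod n) (z : ZMod n → Bool) :
    ∀ d p, p + d = n - 1 →
      ((z (s - (p : ZMod n)) = z (s - ((n-1 : ℕ) : ZMod n))) ↔ cnt s p z % 2 = 0) := by
  intro d
  induction d with
  | zero =>
    intro p hp
    have : p = n - 1 := by omega
    subst this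
    rw [cnt, Finset.Ico_self, Finset.sum_empty]
    simp
  | succ d ih =>
    intro p hp
    have hp1 : p < n - 1 := by omega
    have hsplit : cnt s p z =
        (if z (s - (p : ZMod n)) = z (s - ((p + 1 : ℕ) : ZMod n)) then 0 else 1) + cnt s (p+1) z := by
      rw [cnt, cnt, Finset.sum_eq_sum_Ico_succ_bot hp1]
    have hih := ih (p+1) (by omega)
    by_cases hpq : z (s - (p : ZMod n)) = z (s - ((p + 1 : ℕ) : ZMod n))
    · rw [hsplit, if_pos hpq, hpq, zero_add]
      exact hih
    · rw [hsplit, if_neg hpq, bool_ne hpq]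
      simp only [Nat.cast_add, Nat.cast_one] at hih ⊢
      rcases hb : z (s - ((p : ZMod n) + 1)) <;> rcases he : z (s - ((n-1 : ℕ) : ZMod n)) <;>
        simp [hb, he] at hih ⊢ <;> omega

/-- The greedy writing lemma with the suffix-domination invariant. -/
lemma main [NeZero n] (s : ZMod n) (y : ZMod n → Bool) :
    ∀ m k, k + m = n - 1 → ∀ z : ZMod n → Bool,
      (∀ t : ℕ, t < k → z (s - (t : ZMod n)) = y (s - (t : ZMod n))) →
      (∀ p : ℕ, k ≤ p → p ≤ n - 1 → cnt s p y ≤ cnt s p z) →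
      z (s - ((n-1 : ℕ) : ZMod n)) = y (s - ((n-1 : ℕ) : ZMod n)) →
      Relation.ReflTransGen step z y := by
  have hn : 0 < n := Nat.pos_of_ne_zero (NeZero.ne n)
  intro m
  induction m with
  | zero =>
    intro k hk z hfro _ hlast
    have hke : k = n - 1 := by omega
    have hzy : z = y := by
      funext i
      have hi : s - (((s - i).val : ℕ) : ZMod n) = i := by
        rw [ZMod.natCast_rightInverse (s - i), sub_sub_cancel]
      rcases Nat.lt_or_ge (s - i).val (n - 1) with hv | hv
      · rw [← hi]; exact hfro _ (by omega)
      · have hveq : (s - i).val = n - 1 := by have := ZMod.val_lt (s - i); omega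
        rw [← hi, hveq]; exact hlast
    rw [hzy]
  | succ m ih =>
    intro k hk z hfro hdom hlast
    have hk1 : k < n - 1 := by omega
    have hkn : k < n := by omega
    by_cases hzk : z (s - (k : ZMod n)) = y (s - (k : ZMod n))
    · refine ih (k + 1) (by omega) z ?_ (fun p hp1 hp2 => hdom p (by omega) hp2) hlast
      intro t ht
      rcases Nat.lt_or_ge t k with h | h
      · exact hfro t h
      · have : t = k := by omega
        rw [this]; exact hzk
    · have hSD : cnt s k y + 1 ≤ cnt s k z := by
        have hpz := parity s z (n - 1 - k) k (by omega)
        have hpy := parity s y (n - 1 - k) k (by omega)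
        have hd := hdom k le_rfl (by omega)
        have h4 : y (s - ((n-1 : ℕ) : ZMod n)) = z (s - ((n-1 : ℕ) : ZMod n)) := hlast.symm
        rcases h1 : z (s - (k : ZMod n)) <;> rcases h2 : y (s - (k : ZMod n)) <;>
          rcases h3 : z (s - ((n-1 : ℕ) : ZMod n)) <;> rw [h3] at h4 <;>
            simp [h1, h2, h3, h4] at hpz hpy hzk ⊢ <;> omega
      set v := y (s - (k : ZMod n)) with hv
      have hzkv : z (s - (k : ZMod n)) = !v := bool_ne hzk
      -- find the minimal source
      have hex : ∃ t, k < t ∧ t ≤ n - 1 ∧ z (s - (t : ZMod n)) = v := by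
        by_contra hno
        push_neg at hno
        have hall : ∀ m : ℕ, k ≤ m → m ≤ n - 1 → z (s - (m : ZMod n)) = !v := by
          intro m h1 h2
          rcases Nat.eq_or_lt_of_le h1 with h1' | h1'
          · rw [← h1']; exact hzkv
          · exact bool_ne (hno m h1' h2)
        have hzero : cnt s k z = 0 := by
          rw [cnt]
          refine Finset.sum_eq_zero fun m hm => ?_
          rw [Finset.mem_Ico] at hm
          rw [hall m hm.1 (by omega), hall (m + 1) (by omega) (by omega)]
          simp
        omega
      classical
      set c := Nat.find hex with hc
      obtain ⟨hck, hcn, hcv⟩ := Nat.find_spec hex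
      rw [← hc] at hck hcn hcv
      have hbelow : ∀ m : ℕ, k ≤ m → m < c → z (s - (m : ZMod n)) = !v := by
        intro m h1 h2
        rcases Nat.eq_or_lt_of_le h1 with h1' | h1'
        · rw [← h1']; exact hzkv
        · have := Nat.find_min hex h2
          push_neg at this
          exact bool_ne (this h1' (by omega))
      obtain ⟨z', hre, hset, hold⟩ := pull s v (c - k) k (by omega) z
        (by rw [show k + (c - k) = c from by omega]; exact hcv)
      have hck' : k + (c - k) = c := by omega
      rw [hck'] at hset hold
      -- z' preserves cells ≥ c and < k
      have huntouched : ∀ m : ℕ, m < n → (m < k ∨ c ≤ m) → z' (s - (m : ZMod n)) = z (s - (m : ZMod n)) := by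
        intro m hmn hm
        refine hold _ fun m' hm1 hm2 hcon => ?_
        have := pos_inj (by omega) (by omega) hcon
        omega
      -- domination for z' at all p ≥ k+1
      have hdom' : ∀ p : ℕ, k + 1 ≤ p → p ≤ n - 1 → cnt s p y ≤ cnt s p z' := by
        intro p hp1 hp2
        rcases Nat.lt_or_ge p c with hpc | hpc
        · -- p < c : cnt s p z' = cnt s p z - 1, and cnt s p z = cnt s k z ≥ cnt s k y + 1 ≥ cnt s p y + 1
          have hcm : c - 1 ∈ Finset.Ico p (n - 1) := Finset.mem_Ico.mpr ⟨by omega, by omega⟩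
          have hterm : ∀ m ∈ (Finset.Ico p (n - 1)).erase (c - 1),
              (if z' (s - (m : ZMod n)) = z' (s - ((m + 1 : ℕ) : ZMod n)) then (0:ℕ) else 1)
              = (if z (s - (m : ZMod n)) = z (s - ((m + 1 : ℕ) : ZMod n)) then 0 else 1) := by
            intro m hm
            rw [Finset.mem_erase, Finset.mem_Ico] at hm
            obtain ⟨hm0, hm1, hm2⟩ := hm
            rcases Nat.lt_or_ge m c with hmc | hmc
            · have hmc' : m < c - 1 := by omega
              rw [hset m (by omega) (by omega), hset (m + 1) (by omega) (by omega),
                hbelow m (by omega) (by omega), hbelow (m + 1) (by omega) (by omega)]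
              simp
            · rw [huntouched m (by omega) (Or.inr hmc), huntouched (m+1) (by omega) (Or.inr (by omega))]
          have hz'c : (if z' (s - ((c - 1 : ℕ) : ZMod n)) = z' (s - ((c - 1 + 1 : ℕ) : ZMod n)) then (0:ℕ) else 1) = 0 := by
            rw [hset (c - 1) (by omega) (by omega), hset (c - 1 + 1) (by omega) (by omega)]
            simp
          have hzc : (if z (s - ((c - 1 : ℕ) : ZMod n)) = z (s - ((c - 1 + 1 : ℕ) : ZMod n)) then (0:ℕ) else 1) = 1 := by
            rw [hbelow (c - 1) (by omega) (by omega), show c - 1 + 1 = c from by omega, hcv]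
            simp
          have e1 : cnt s p z = (∑ m ∈ (Finset.Ico p (n - 1)).erase (c - 1),
              (if z (s - (m : ZMod n)) = z (s - ((m + 1 : ℕ) : ZMod n)) then (0:ℕ) else 1))
              + (if z (s - ((c - 1 : ℕ) : ZMod n)) = z (s - ((c - 1 + 1 : ℕ) : ZMod n)) then (0:ℕ) else 1) :=
            (Finset.sum_erase_add _ _ hcm).symm
          have e2 : cnt s p z' = (∑ m ∈ (Finset.Ico p (n - 1)).erase (c - 1),
              (if z' (s - (m : ZMod n)) = z' (s - ((m + 1 : ℕ) : ZMod n)) then (0:ℕ) else 1))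
              + (if z' (s - ((c - 1 : ℕ) : ZMod n)) = z' (s - ((c - 1 + 1 : ℕ) : ZMod n)) then (0:ℕ) else 1) :=
            (Finset.sum_erase_add _ _ hcm).symm
          have e3 : (∑ m ∈ (Finset.Ico p (n - 1)).erase (c - 1),
              (if z' (s - (m : ZMod n)) = z' (s - ((m + 1 : ℕ) : ZMod n)) then (0:ℕ) else 1))
              = ∑ m ∈ (Finset.Ico p (n - 1)).erase (c - 1),
              (if z (s - (m : ZMod n)) = z (s - ((m + 1 : ℕ) : ZMod n)) then (0:ℕ) else 1) :=
            Finset.sum_congr rfl hterm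
          -- cnt s k z = cnt s p z  (z constant on cells k..p)
          have e4 : (∑ m ∈ Finset.Ico k p,
              (if z (s - (m : ZMod n)) = z (s - ((m + 1 : ℕ) : ZMod n)) then (0:ℕ) else 1)) = 0 := by
            refine Finset.sum_eq_zero fun m hm => ?_
            rw [Finset.mem_Ico] at hm
            rw [hbelow m (by omega) (by omega), hbelow (m + 1) (by omega) (by omega)]
            simp
          have e5 : cnt s k z = cnt s p z := by
            rw [cnt, cnt, ← Finset.sum_Ico_consecutive _ (by omega : k ≤ p) (by omega : p ≤ n - 1), e4, zero_add]
          -- cnt s k y ≥ cnt s p y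
          have e6 : cnt s p y ≤ cnt s k y := by
            rw [cnt, cnt, ← Finset.sum_Ico_consecutive _ (by omega : k ≤ p) (by omega : p ≤ n - 1)]
            omega
          omega
        · -- p ≥ c : untouched
          have e7 : cnt s p z' = cnt s p z := by
            rw [cnt, cnt]
            refine Finset.sum_congr rfl fun m hm => ?_
            rw [Finset.mem_Ico] at hm
            rw [huntouched m (by omega) (Or.inr (by omega)), huntouched (m+1) (by omega) (Or.inr (by omega))]
          have := hdom p (by omega) hp2
          omega
      refine hre.trans (ih (k + 1) (by omega) z' ?_ hdom' ?_)
      · intro t ht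
        rcases Nat.lt_or_ge t k with h | h
        · rw [huntouched t (by omega) (Or.inl h)]; exact hfro t h
        · have : t = k := by omega
          rw [this]; exact hset k le_rfl (by omega)
      · rcases Nat.eq_or_lt_of_le hcn with hceq | hclt
        · have h5 : z' (s - ((n-1 : ℕ) : ZMod n)) = v := by
            rw [← hceq]; exact hset c (by omega) le_rfl
          have h6 : y (s - ((n-1 : ℕ) : ZMod n)) = v := by
            rw [← hlast, ← hceq]; exact hcv
          rw [h5, h6]
        · rw [huntouched (n-1) (by omega) (Or.inr (by omega))]; exact hlast

/-- boundary indicator at natural index -/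
def bndN {n : ℕ} (z : ZMod n → Bool) (i : ℕ) : ℕ :=
  if z (i : ZMod n) = z ((i : ZMod n) - 1) then 0 else 1

lemma uc_sum [NeZero n] (z : ZMod n → Bool) :
    uc z = ∑ i ∈ Finset.range n, bndN z i := by
  have h1 : uc z = ∑ i : ZMod n, (if z i = z (i - 1) then 0 else 1) := by
    rw [uc, Finset.card_filter]
    exact Finset.sum_congr rfl fun i _ => by by_cases h : z i = z (i - 1) <;> simp [h]
  rw [h1, ← Fin.sum_univ_eq_sum_range (fun i => bndN z i) n]
  exact (Fintype.sum_equiv (zEquiv n) (fun t : Fin n => bndN z (t : ℕ))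
    (fun i : ZMod n => if z i = z (i - 1) then 0 else 1) fun t => rfl).symm

lemma cast_arc [NeZero n] {w t : ℕ} (ht : t ≤ n - 1) :
    ((w + (n - 1 - t) : ℕ) : ZMod n) = (w : ZMod n) - 1 - (t : ZMod n) := by
  have hn : 0 < n := Nat.pos_of_ne_zero (NeZero.ne n)
  have h1 : ((n - 1 - t : ℕ) : ZMod n) = ((n - 1 : ℕ) : ZMod n) - (t : ZMod n) := by
    rw [← Nat.cast_sub ht]
  have h2 : ((n - 1 : ℕ) : ZMod n) = -1 := by
    have h3 : (((n - 1 : ℕ) + 1 : ℕ) : ZMod n) = 0 := by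
      rw [show (n - 1) + 1 = n from by omega]; exact ZMod.natCast_self n
    push_cast at h3
    exact eq_neg_of_add_eq_zero_left h3
  push_cast
  rw [h1, h2]
  ring

/-- `cnt` as a sum of boundary indicators over an arc of naturals. -/
lemma cnt_arc [NeZero n] (w : ℕ) (p : ℕ) (hp : p ≤ n - 1) (z : ZMod n → Bool) :
    cnt ((w : ZMod n) - 1) p z = ∑ j ∈ Finset.range (n - 1 - p), bndN z (w + 1 + j) := by
  have hn : 0 < n := Nat.pos_of_ne_zero (NeZero.ne n)
  rw [cnt, Finset.sum_Ico_eq_sum_range]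
  conv_lhs => rw [← Finset.sum_range_reflect]
  have hL : n - 1 - p = n - 1 - p := rfl
  refine Finset.sum_congr rfl fun j hj => ?_
  rw [Finset.mem_range] at hj
  set t := p + (n - 1 - p - 1 - j) with htdef
  have ht1 : t ≤ n - 1 := by omega
  have ht2 : t + 1 ≤ n - 1 := by omega
  have he1 : ((w : ZMod n) - 1) - (t : ZMod n) = ((w + (n - 1 - t) : ℕ) : ZMod n) := by
    rw [cast_arc (by omega)]
  have he2 : ((w : ZMod n) - 1) - ((t + 1 : ℕ) : ZMod n) = ((w + (n - 1 - t) : ℕ) : ZMod n) - 1 := by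
    rw [cast_arc (by omega)]
    push_cast
    ring
  rw [he1, he2]
  rw [show w + (n - 1 - t) = w + 1 + j from by omega]
  rfl

/-- cumulative difference function -/
def Af {n : ℕ} [NeZero n] (x y : ZMod n → Bool) (m : ℕ) : ℤ :=
  ∑ i ∈ Finset.range m, ((bndN x i : ℤ) - (bndN y i : ℤ))

lemma Af_succ [NeZero n] (x y : ZMod n → Bool) (m : ℕ) :
    Af x y (m + 1) = Af x y m + ((bndN x m : ℤ) - (bndN y m : ℤ)) := by
  rw [Af, Af, Finset.sum_range_succ]

lemma Af_step_le [NeZero n] (x y : ZMod n → Bool) (m : ℕ) :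
    Af x y (m + 1) ≤ Af x y m + 1 := by
  rw [Af_succ]
  have h1 : (bndN x m : ℤ) ≤ 1 := by rw [bndN]; split <;> simp
  have h2 : (0 : ℤ) ≤ (bndN y m : ℤ) := Int.natCast_nonneg _
  omega

lemma Af_period [NeZero n] (x y : ZMod n → Bool) :
    ∀ m, Af x y (m + n) = Af x y m + Af x y n := by
  intro m
  induction m with
  | zero => simp [Af]
  | succ m ih =>
    have hb : ∀ z : ZMod n → Bool, bndN z (m + n) = bndN z m := by
      intro z
      rw [bndN, bndN]
      have : ((m + n : ℕ) : ZMod n) = (m : ZMod n) := by push_cast; simp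
      rw [this]
    rw [show m + 1 + n = (m + n) + 1 from by omega, Af_succ, ih, Af_succ, hb, hb]
    ring

lemma Af_Ico [NeZero n] (x y : ZMod n → Bool) {a b : ℕ} (hab : a ≤ b) :
    Af x y b - Af x y a = ∑ i ∈ Finset.Ico a b, ((bndN x i : ℤ) - (bndN y i : ℤ)) := by
  rw [Af, Af, Finset.sum_Ico_eq_sub _ hab]


theorem greater_u_implies_reachable'
    (n : ℕ) [NeZero n] (x y : ZMod n → Bool) (h : uc x > uc y) :
    Relation.ReflTransGen step x y := by
  classical
  have hn : 0 < n := Nat.pos_of_ne_zero (NeZero.ne n)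
  have hT : 1 ≤ Af x y n := by
    have hx := uc_sum x
    have hy := uc_sum y
    have : Af x y n = (uc x : ℤ) - (uc y : ℤ) := by
      rw [Af, hx, hy, Finset.sum_sub_distrib]
      push_cast
      rfl
    omega
  -- pick the last argmin u of (Af x y) on [1, n]
  have hne : (Finset.Icc 1 n).Nonempty := ⟨1, Finset.mem_Icc.mpr ⟨le_refl 1, hn⟩⟩
  obtain ⟨u0, hu0mem, hu0min⟩ := Finset.exists_min_image (Finset.Icc 1 n) (Af x y) hne
  have hTne : ((Finset.Icc 1 n).filter (fun m => Af x y m ≤ Af x y u0)).Nonempty :=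
    ⟨u0, Finset.mem_filter.mpr ⟨hu0mem, le_rfl⟩⟩
  set u := ((Finset.Icc 1 n).filter (fun m => Af x y m ≤ Af x y u0)).max' hTne with hu
  have huT := Finset.max'_mem _ hTne
  rw [← hu, Finset.mem_filter, Finset.mem_Icc] at huT
  obtain ⟨⟨hu1, hun⟩, huval⟩ := huT
  have humin : ∀ m ∈ Finset.Icc 1 n, Af x y u ≤ Af x y m := by
    intro m hm
    exact le_trans huval (hu0min m hm)
  have hustrict : ∀ m, u < m → m ≤ n → Af x y u < Af x y m := by
    intro m hm1 hm2
    rcases lt_or_ge (Af x y u) (Af x y m) with h' | h'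
    · exact h'
    · exfalso
      have hmmem : m ∈ Finset.Icc 1 n := Finset.mem_Icc.mpr ⟨by omega, hm2⟩
      have : m ∈ (Finset.Icc 1 n).filter (fun m => Af x y m ≤ Af x y u0) :=
        Finset.mem_filter.mpr ⟨hmmem, le_trans h' huval⟩
      have := Finset.le_max' _ m this
      omega
  -- the step at u is +1 : x has a boundary at u, y does not
  have hgu : Af x y (u + 1) = Af x y u + ((bndN x u : ℤ) - (bndN y u : ℤ)) := Af_succ x y u
  have hstep1 : Af x y u + 1 ≤ Af x y (u + 1) := by
    rcases Nat.eq_or_lt_of_le hun with he | hlt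
    · have hper : Af x y (u + 1) = Af x y 1 + Af x y n := by
        rw [show u + 1 = 1 + n from by omega, Af_period]
      have h1 : Af x y u ≤ Af x y 1 := humin 1 (Finset.mem_Icc.mpr ⟨le_rfl, hn⟩)
      omega
    · have := hustrict (u + 1) (by omega) (by omega)
      omega
  have hbx : bndN x u = 1 ∧ bndN y u = 0 := by
    have h1 : (bndN x u : ℤ) ≤ 1 := by rw [bndN]; split <;> simp
    have h2 : (0 : ℤ) ≤ (bndN y u : ℤ) := Int.natCast_nonneg _
    refine ⟨?_, ?_⟩ <;> omega
  have hxu : x (u : ZMod n) ≠ x ((u : ZMod n) - 1) := by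
    have h1 := hbx.1; rw [bndN] at h1; by_contra hcon; simp [hcon] at h1
  have hyu : y (u : ZMod n) = y ((u : ZMod n) - 1) := by
    have h1 := hbx.2; rw [bndN] at h1; by_contra hcon; simp [hcon] at h1
  have hcastu : ((u - 1 : ℕ) : ZMod n) = (u : ZMod n) - 1 := by
    rw [Nat.cast_sub hu1]; simp
  -- the good cut
  have key : ∃ w : ℕ, x (w : ZMod n) = y (w : ZMod n) ∧
      ∀ m, w + 1 ≤ m → m ≤ w + n → Af x y (w + 1) ≤ Af x y m := by
    by_cases hal : x ((u - 1 : ℕ) : ZMod n) = y ((u - 1 : ℕ) : ZMod n)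
    · refine ⟨u - 1, hal, ?_⟩
      intro m hm1 hm2
      rw [show u - 1 + 1 = u from by omega] at hm1 ⊢
      rcases Nat.lt_or_ge m (n + 1) with h1 | h1
      · exact humin m (Finset.mem_Icc.mpr ⟨by omega, by omega⟩)
      · have hper : Af x y m = Af x y (m - n) + Af x y n := by
          rw [← Af_period, show m - n + n = m from by omega]
        have h2 : Af x y u ≤ Af x y (m - n) := humin (m - n) (Finset.mem_Icc.mpr ⟨by omega, by omega⟩)
        omega
    · have halign : x (u : ZMod n) = y (u : ZMod n) := by
        rw [hcastu] at hal
        have h1 : y ((u : ZMod n) - 1) = !x ((u : ZMod n) - 1) := by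
          cases hc1 : x ((u : ZMod n) - 1) <;> cases hc2 : y ((u : ZMod n) - 1) <;>
            rw [hc1, hc2] at hal <;> simp_all
        have h2 : x (u : ZMod n) = !x ((u : ZMod n) - 1) := by
          cases hc1 : x ((u : ZMod n) - 1) <;> cases hc2 : x (u : ZMod n) <;>
            rw [hc1, hc2] at hxu <;> simp_all
        rw [h2, hyu, h1]
      refine ⟨u, halign, ?_⟩
      intro m hm1 hm2
      have hle : Af x y (u + 1) ≤ Af x y u + 1 := Af_step_le x y u
      rcases Nat.lt_or_ge m (n + 1) with h1 | h1
      · rcases Nat.eq_or_lt_of_le hm1 with he | hlt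
        · rw [← he]
        · have := hustrict m (by omega) (by omega)
          omega
      · have hper : Af x y m = Af x y (m - n) + Af x y n := by
          rw [← Af_period, show m - n + n = m from by omega]
        have h2 : Af x y u ≤ Af x y (m - n) := humin (m - n) (Finset.mem_Icc.mpr ⟨by omega, by omega⟩)
        omega
  obtain ⟨w, halign, hge⟩ := key
  -- suffix domination
  have hdom : ∀ p : ℕ, 0 ≤ p → p ≤ n - 1 →
      cnt ((w : ZMod n) - 1) p y ≤ cnt ((w : ZMod n) - 1) p x := by
    intro p _ hp
    have hx := cnt_arc w p hp x
    have hy := cnt_arc w p hp y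
    have hsum : (cnt ((w : ZMod n) - 1) p x : ℤ) - (cnt ((w : ZMod n) - 1) p y : ℤ)
        = Af x y (w + 1 + (n - 1 - p)) - Af x y (w + 1) := by
      rw [hx, hy, Af_Ico x y (by omega : w + 1 ≤ w + 1 + (n - 1 - p)),
        Finset.sum_Ico_eq_sum_range, Finset.sum_sub_distrib]
      push_cast
      rw [show w + 1 + (n - 1 - p) - (w + 1) = n - 1 - p from by omega]
    have hge' := hge (w + 1 + (n - 1 - p)) (by omega) (by omega)
    omega
  -- last cell alignment
  have hlastcell : ((w : ZMod n) - 1) - ((n - 1 : ℕ) : ZMod n) = (w : ZMod n) := by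
    have h2 : ((n - 1 : ℕ) : ZMod n) = -1 := by
      have h3 : (((n - 1 : ℕ) + 1 : ℕ) : ZMod n) = 0 := by
        rw [show (n - 1) + 1 = n from by omega]; exact ZMod.natCast_self n
      push_cast at h3
      exact eq_neg_of_add_eq_zero_left h3
    rw [h2]; ring
  exact main ((w : ZMod n) - 1) y (n - 1) 0 (by omega) x
    (fun t ht => absurd ht (Nat.not_lt_zero t))
    (fun p hp1 hp2 => hdom p hp1 hp2)
    (by rw [hlastcell]; exact halign)

/-- in the canonical positive circuit, if `u x > u y` then `y` is
reachable from `x` in the general iteration graph. -/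
theorem greater_u_implies_reachable
    (n : ℕ) [NeZero n] (x y : ZMod n → Bool) (h : uc x > uc y) :
    Relation.ReflTransGen step x y :=
  greater_u_implies_reachable' n x y h
end

section
/- For a positive Boolean automata circuit of size n, the maximum value of u over all configurations is n if n is even and n-1 if n is odd; for a negative circuit of size n, the maximum is n if n is odd and n-1 if n is even. -/
open Finset

/-- Indicator of a Boolean, in `ZMod 2`. -/
private def ind (b : Bool) : ZMod 2 := if b then 1 else 0

/-- Parity lemma: the number of unstable nodes has the parity of the number of
negative arcs. -/
private lemma parity_lemma {n : ℕ} [NeZero n] (f : ZMod n → Bool → Bool)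
    (hf : ∀ i, f i = id ∨ f i = fun b => !b) (x : ZMod n → Bool) :
    ((U f x).card : ZMod 2) =
      ((univ.filter (fun i : ZMod n => f i = fun b => !b)).card : ZMod 2) := by
  have key : ∀ i : ZMod n,
      (if x i ≠ f i (x (i - 1)) then (1 : ZMod 2) else 0) =
        ind (x i) + ind (x (i - 1)) +
          (if f i = (fun b => !b) then (1 : ZMod 2) else 0) := by
    intro i
    rcases hf i with h | h <;> rw [h]
    · have hne : (id : Bool → Bool) ≠ (fun b => !b) := by
        intro h; simpa using congrFun h true
      simp only [if_neg hne]
      cases x i <;> cases x (i - 1) <;> simp [ind] <;> decide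
    · simp only [if_pos rfl]
      cases x i <;> cases x (i - 1) <;> simp [ind] <;> decide
  have h1 : ((U f x).card : ZMod 2) =
      ∑ i : ZMod n, (if x i ≠ f i (x (i - 1)) then (1 : ZMod 2) else 0) := by
    rw [U, Finset.card_filter, Nat.cast_sum]
    refine Finset.sum_congr rfl fun i _ => ?_
    split <;> simp
  have h2 : ((univ.filter (fun i : ZMod n => f i = fun b => !b)).card : ZMod 2) =
      ∑ i : ZMod n, (if f i = (fun b => !b) then (1 : ZMod 2) else 0) := by
    rw [Finset.card_filter, Nat.cast_sum]
    refine Finset.sum_congr rfl fun i _ => ?_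
    split <;> simp
  rw [h1, h2]
  calc ∑ i : ZMod n, (if x i ≠ f i (x (i - 1)) then (1 : ZMod 2) else 0)
      = ∑ i : ZMod n, (ind (x i) + ind (x (i - 1)) +
          (if f i = (fun b => !b) then (1 : ZMod 2) else 0)) :=
        Finset.sum_congr rfl fun i _ => key i
    _ = (∑ i : ZMod n, ind (x i)) + (∑ i : ZMod n, ind (x (i - 1))) +
          ∑ i : ZMod n, (if f i = (fun b => !b) then (1 : ZMod 2) else 0) := by
        rw [Finset.sum_add_distrib, Finset.sum_add_distrib]
    _ = ∑ i : ZMod n, (if f i = (fun b => !b) then (1 : ZMod 2) else 0) := by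
        have he : (∑ i : ZMod n, ind (x (i - 1))) = ∑ i : ZMod n, ind (x i) :=
          Fintype.sum_equiv (Equiv.subRight (1 : ZMod n))
            (fun i => ind (x (i - 1))) (fun i => ind (x i)) (fun i => rfl)
        rw [he, CharTwo.add_self_eq_zero, zero_add]

/-- The greedy sequence: make each arc unstable in turn. -/
private def Fseq {n : ℕ} [NeZero n] (f : ZMod n → Bool → Bool) : ℕ → Bool
  | 0 => false
  | k + 1 => !(f (((k + 1 : ℕ) : ZMod n)) (Fseq f k))

/-- The configuration built from the greedy sequence. -/
private def xc {n : ℕ} [NeZero n] (f : ZMod n → Bool → Bool) (i : ZMod n) : Bool :=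
  Fseq f i.val

private lemma xc_unstable {n : ℕ} [NeZero n] (f : ZMod n → Bool → Bool)
    {i : ZMod n} (hi : i ≠ 0) : xc f i ≠ f i (xc f (i - 1)) := by
  have hv : i.val ≠ 0 := by
    intro h
    apply hi
    have := ZMod.natCast_val (R := ZMod n) i
    rw [ZMod.cast_id] at this
    rw [← this, h, Nat.cast_zero]
  obtain ⟨k, hk⟩ : ∃ k, i.val = k + 1 := ⟨i.val - 1, by omega⟩
  have hkn : k + 1 < n := hk ▸ ZMod.val_lt i
  have hcast : ((k + 1 : ℕ) : ZMod n) = i := by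
    rw [← hk]
    have := ZMod.natCast_val (R := ZMod n) i
    rwa [ZMod.cast_id] at this
  have hsub : (i - 1).val = k := by
    have : i - 1 = ((k : ℕ) : ZMod n) := by
      rw [← hcast]; push_cast; ring
    rw [this, ZMod.val_cast_of_lt (by omega)]
  have hxi : xc f i = !(f i (Fseq f k)) := by
    rw [xc, hk, Fseq, hcast]
  rw [hxi, xc, hsub]
  exact Bool.not_ne_self _

/-- the maximum of `u` over all configurations is `n` when `n`
has the parity of the number of negative arcs, and `n - 1` otherwise (covering
both the positive and the negative case). -/
theorem max_unstable_count
    (n : ℕ) [NeZero n] (f : ZMod n → Bool → Bool)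
    (hf : ∀ i, f i = id ∨ f i = fun b => !b) :
    IsGreatest (Set.range (fun x : ZMod n → Bool => (U f x).card))
      (if n % 2 = (univ.filter (fun i : ZMod n => f i = fun b => !b)).card % 2
       then n else n - 1) := by
  set N := (univ.filter (fun i : ZMod n => f i = fun b => !b)).card with hN
  have hn0 : 0 < n := Nat.pos_of_ne_zero (NeZero.ne n)
  have hpar : ∀ x : ZMod n → Bool, (U f x).card % 2 = N % 2 := by
    intro x
    have := parity_lemma f hf x
    rwa [ZMod.natCast_eq_natCast_iff', ← hN] at this
  have hle : ∀ x : ZMod n → Bool, (U f x).card ≤ n := by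
    intro x
    calc (U f x).card ≤ (univ : Finset (ZMod n)).card := Finset.card_filter_le _ _
      _ = n := by rw [Finset.card_univ, ZMod.card]
  have hge : n - 1 ≤ (U f (xc f)).card := by
    have hsub : (univ : Finset (ZMod n)).erase 0 ⊆ U f (xc f) := by
      intro i hi
      rw [Finset.mem_erase] at hi
      exact Finset.mem_filter.mpr ⟨Finset.mem_univ i, xc_unstable f hi.1⟩
    calc n - 1 = ((univ : Finset (ZMod n)).erase 0).card := by
          rw [Finset.card_erase_of_mem (Finset.mem_univ 0), Finset.card_univ,
            ZMod.card]
      _ ≤ (U f (xc f)).card := Finset.card_le_card hsub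
  by_cases h : n % 2 = N % 2
  · rw [if_pos h]
    constructor
    · refine ⟨xc f, ?_⟩
      show (U f (xc f)).card = _
      have h1 := hpar (xc f)
      have h2 := hle (xc f)
      omega
    · rintro m ⟨x, rfl⟩
      exact hle x
  · rw [if_neg h]
    constructor
    · refine ⟨xc f, ?_⟩
      show (U f (xc f)).card = _
      have h1 := hpar (xc f)
      have h2 := hle (xc f)
      omega
    · rintro m ⟨x, rfl⟩
      show (U f x).card ≤ _
      have h1 := hpar x
      have h2 := hle x
      omega
end

section
/- For a Boolean automata circuit of size n, any configuration x with u(x) = k != 0 is uniquely determined by the pair (U(x), x_{i_1}) where U(x) = {i_1 < ... < i_k} is its set of unstable nodes and x_{i_1} is the state of its smallest unstable node: the map x -> (U(x), x_{i_1}) is injective on {x : u(x) = k}. -/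
open Finset

/-- a configuration with `u x = k ≠ 0` is determined by its
unstable set together with its state at the smallest unstable node: if two such
configurations have the same unstable set and agree at the node of smallest
value in it, they are equal. -/
theorem configuration_determined_by_unstable_set
    (n k : ℕ) [NeZero n] (f : ZMod n → Bool → Bool)
    (hf : ∀ i, f i = id ∨ f i = fun b => !b) (hk : k ≠ 0)
    (x y : ZMod n → Bool)
    (hx : (U f x).card = k) (hy : (U f y).card = k)
    (hUxy : U f x = U f y)
    (i₁ : ZMod n) (hi₁ : i₁ ∈ U f x)
    (hmin : ∀ j ∈ U f x, i₁.val ≤ j.val)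
    (hstate : x i₁ = y i₁) :
    x = y := by
  have key : ∀ t : ℕ, x (i₁ + t) = y (i₁ + t) := by
    intro t
    induction t with
    | zero => simpa using hstate
    | succ t ih =>
      set j : ZMod n := i₁ + (t + 1 : ℕ) with hj
      have hjm : j - 1 = i₁ + t := by push_cast [hj]; ring
      by_cases hmem : j ∈ U f x
      · have hmem' : j ∈ U f y := hUxy ▸ hmem
        simp only [U, mem_filter] at hmem hmem'
        have h1 : x j = !(f j (x (j - 1))) := by
          cases hb : f j (x (j-1)) <;> cases hxb : x j <;> simp_all
        have h2 : y j = !(f j (y (j - 1))) := by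
          cases hb : f j (y (j-1)) <;> cases hxb : y j <;> simp_all
        rw [h1, h2, hjm, ih]
      · have hmem' : j ∉ U f y := hUxy ▸ hmem
        simp only [U, mem_filter, mem_univ, true_and, not_not] at hmem hmem'
        rw [hmem, hmem', hjm, ih]
  funext i
  have : i = i₁ + ((i - i₁).val : ZMod n) := by
    rw [ZMod.natCast_val, ZMod.cast_id]; ring
  rw [this, key]
end

section
/- For a negative Boolean automata circuit of size n, the set of configurations of minimal u-value (u(x) = 1) has exactly 2n elements, and u(x) >= 1 for all configurations x (so a negative circuit has no fixed point under any update). -/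
open Finset

namespace NCaux
variable {n : ℕ} [NeZero n]

def e (b : Bool) : ZMod 2 := if b then 1 else 0
def einv (z : ZMod 2) : Bool := decide (z = 1)

lemma e_inj : Function.Injective e := by decide
lemma e_einv : ∀ z, e (einv z) = z := by decide
lemma einv_e : ∀ b, einv (e b) = b := by decide
lemma ne_xor_iff : ∀ a b c : Bool, (a ≠ (b ^^ c)) ↔ e a + e b + e c = 1 := by decide
lemma two_z : ∀ z : ZMod 2, z + z = 0 := by decide

lemma odd_cast (m : ℕ) (h : Odd m) : (m : ZMod 2) = 1 := by
  rw [← ZMod.natCast_mod m 2, Nat.odd_iff.mp h]; rfl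

lemma odd_of_cast (m : ℕ) (h : (m : ZMod 2) = 1) : Odd m := by
  rw [Nat.odd_iff]
  rcases Nat.mod_two_eq_zero_or_one m with h2 | h2
  · exfalso
    rw [← ZMod.natCast_mod m 2, h2] at h
    exact absurd h (by decide)
  · exact h2

omit [NeZero n] in
lemma f_eq_xor (f : ZMod n → Bool → Bool) (hf : ∀ i, f i = id ∨ f i = fun b => !b)
    (i : ZMod n) (z : Bool) : f i z = (z ^^ f i false) := by
  rcases hf i with h | h <;> rw [h] <;> cases z <;> rfl

lemma mem_U_iff (f : ZMod n → Bool → Bool) (x : ZMod n → Bool) (i : ZMod n) :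
    i ∈ U f x ↔ x i ≠ f i (x (i - 1)) := by simp [U]

def step (f : ZMod n → Bool → Bool) (S : Finset (ZMod n)) (i : ZMod n) : ZMod 2 :=
  e (f i false) + e (decide (i ∈ S))

lemma step_spec (f : ZMod n → Bool → Bool) (hf : ∀ i, f i = id ∨ f i = fun b => !b)
    (x : ZMod n → Bool) (i : ZMod n) :
    e (x i) = e (x (i - 1)) + step f (U f x) i := by
  have hs : step f (U f x) i = e (f i false) + e (decide (i ∈ U f x)) := rfl
  rw [hs]
  by_cases hm : i ∈ U f x
  · have h := (mem_U_iff f x i).mp hm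
    rw [f_eq_xor f hf] at h
    simp only [hm, decide_true]
    revert h
    generalize x i = a; generalize x (i-1) = b; generalize f i false = c
    revert a b c; decide
  · have h := (mem_U_iff f x i).not.mp hm
    push_neg at h
    rw [f_eq_xor f hf] at h
    simp only [hm, decide_false]
    revert h
    generalize x i = a; generalize x (i-1) = b; generalize f i false = c
    revert a b c; decide

def tele (f : ZMod n → Bool → Bool) (S : Finset (ZMod n)) (k : ℕ) : ZMod 2 :=
  ∑ j ∈ range k, step f S ((j + 1 : ℕ) : ZMod n)

lemma sum_range_step (f : ZMod n → Bool → Bool) (S : Finset (ZMod n)) :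
    tele f S n = ∑ i : ZMod n, step f S i := by
  rw [tele]
  apply Finset.sum_nbij' (fun j => ((j + 1 : ℕ) : ZMod n)) (fun i => (i - 1).val)
  · intro a _; exact mem_univ _
  · intro a _; exact Finset.mem_range.mpr (ZMod.val_lt _)
  · intro a ha
    rw [Nat.cast_add_one, add_sub_cancel_right, ZMod.val_cast_of_lt (mem_range.mp ha)]
  · intro a _
    rw [Nat.cast_add, Nat.cast_one, ZMod.natCast_rightInverse (a - 1), sub_add_cancel]
  · intro a _; rfl

lemma sum_univ_step (f : ZMod n → Bool → Bool) (hf : ∀ i, f i = id ∨ f i = fun b => !b)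
    (S : Finset (ZMod n)) :
    ∑ i : ZMod n, step f S i =
      ((univ.filter (fun i : ZMod n => f i = fun b => !b)).card : ZMod 2) + (S.card : ZMod 2) := by
  rw [show (∑ i : ZMod n, step f S i) = (∑ i : ZMod n, e (f i false)) + ∑ i : ZMod n, e (decide (i ∈ S)) by
    rw [← Finset.sum_add_distrib]; rfl]
  congr 1
  · have h1 : ∀ i : ZMod n, e (f i false) = if f i = (fun b => !b) then (1 : ZMod 2) else 0 := by
      intro i
      rcases hf i with h | h <;> rw [h]
      · rw [if_neg (by intro hc; exact absurd (congrFun hc false) (by decide))]; rfl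
      · rw [if_pos rfl]; rfl
    rw [Finset.sum_congr rfl (fun i _ => h1 i), Finset.sum_boole]
  · have h2 : ∀ i : ZMod n, e (decide (i ∈ S)) = if i ∈ S then (1 : ZMod 2) else 0 := by
      intro i; by_cases h : i ∈ S <;> simp [h, e]
    rw [Finset.sum_congr rfl (fun i _ => h2 i), Finset.sum_boole]
    congr 1
    simp

lemma tele_spec (f : ZMod n → Bool → Bool) (hf : ∀ i, f i = id ∨ f i = fun b => !b)
    (x : ZMod n → Bool) (k : ℕ) :
    e (x ((k : ℕ) : ZMod n)) = e (x 0) + tele f (U f x) k := by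
  induction k with
  | zero => simp [tele]
  | succ k ih =>
    rw [tele, sum_range_succ, ← tele, ← add_assoc, ← ih]
    have h1 : ((k + 1 : ℕ) : ZMod n) - 1 = ((k : ℕ) : ZMod n) := by push_cast; ring
    have h := step_spec f hf x ((k + 1 : ℕ) : ZMod n)
    rw [h1] at h
    exact h

lemma card_U_odd (f : ZMod n → Bool → Bool) (hf : ∀ i, f i = id ∨ f i = fun b => !b)
    (hneg : Odd (univ.filter (fun i : ZMod n => f i = fun b => !b)).card)
    (x : ZMod n → Bool) : Odd (U f x).card := by
  have h := tele_spec f hf x n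
  rw [ZMod.natCast_self] at h
  have ht : tele f (U f x) n = 0 := (left_eq_add.mp h)
  rw [sum_range_step, sum_univ_step f hf, odd_cast _ hneg] at ht
  apply odd_of_cast
  have := two_z 1
  linear_combination ht - this

lemma det (f : ZMod n → Bool → Bool) (hf : ∀ i, f i = id ∨ f i = fun b => !b)
    (x y : ZMod n → Bool) (h0 : x 0 = y 0) (hU : U f x = U f y) : x = y := by
  funext i
  have hx := tele_spec f hf x i.val
  have hy := tele_spec f hf y i.val
  rw [ZMod.natCast_rightInverse i] at hx hy
  apply e_inj
  rw [hx, hy, h0, hU]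

def build (f : ZMod n → Bool → Bool) (S : Finset (ZMod n)) (b : Bool) : ZMod n → Bool :=
  fun i => einv (e b + tele f S i.val)

lemma build_zero (f : ZMod n → Bool → Bool) (S : Finset (ZMod n)) (b : Bool) :
    build f S b 0 = b := by
  simp [build, tele, ZMod.val_zero, einv_e]

lemma tele_succ (f : ZMod n → Bool → Bool) (S : Finset (ZMod n)) (k : ℕ) :
    tele f S (k + 1) = tele f S k + step f S ((k + 1 : ℕ) : ZMod n) := by
  rw [tele, sum_range_succ]; rfl

lemma U_build (f : ZMod n → Bool → Bool) (hf : ∀ i, f i = id ∨ f i = fun b => !b)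
    (hneg : Odd (univ.filter (fun i : ZMod n => f i = fun b => !b)).card)
    (S : Finset (ZMod n)) (hS : Odd S.card) (b : Bool) :
    U f (build f S b) = S := by
  have h1 : 1 ≤ n := Nat.one_le_iff_ne_zero.mpr (NeZero.ne n)
  set y := build f S b with hy
  have key : ∀ i : ZMod n, e (y i) = e (y (i - 1)) + step f S i := by
    intro i
    by_cases hi : i = 0
    · subst hi
      have hm1 : (0 : ZMod n) - 1 = ((n - 1 : ℕ) : ZMod n) := by
        rw [Nat.cast_sub h1, ZMod.natCast_self, Nat.cast_one]
      have hval : ((n - 1 : ℕ) : ZMod n).val = n - 1 :=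
        ZMod.val_cast_of_lt (Nat.sub_lt (Nat.pos_of_ne_zero (NeZero.ne n)) one_pos)
      have hyv : e (y ((0:ZMod n) - 1)) = e b + tele f S (n - 1) := by
        rw [hm1, hy, build, hval, e_einv]
      have hy0 : e (y 0) = e b := by rw [hy, build_zero]
      have htn : tele f S n = tele f S (n - 1) + step f S 0 := by
        have h := tele_succ f S (n - 1)
        rwa [Nat.sub_add_cancel h1, ZMod.natCast_self] at h
      have htot : tele f S n = 0 := by
        rw [sum_range_step, sum_univ_step f hf, odd_cast _ hneg, odd_cast _ hS]
        decide
      rw [hy0, hyv]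
      rw [htot] at htn
      linear_combination htn
    · have hk1 : 1 ≤ i.val := Nat.one_le_iff_ne_zero.mpr (fun h => hi (by
        rwa [ZMod.val_eq_zero] at h))
      have hi1 : i - 1 = ((i.val - 1 : ℕ) : ZMod n) := by
        rw [Nat.cast_sub hk1, ZMod.natCast_rightInverse i, Nat.cast_one]
      have hval : ((i.val - 1 : ℕ) : ZMod n).val = i.val - 1 :=
        ZMod.val_cast_of_lt (lt_of_le_of_lt (Nat.sub_le _ _) (ZMod.val_lt i))
      have hyv : e (y (i - 1)) = e b + tele f S (i.val - 1) := by
        rw [hi1, hy, build, hval, e_einv]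
      have hyi : e (y i) = e b + tele f S i.val := by rw [hy, build, e_einv]
      have htk : tele f S i.val = tele f S (i.val - 1) + step f S i := by
        have h := tele_succ f S (i.val - 1)
        rwa [Nat.sub_add_cancel hk1, ZMod.natCast_rightInverse i] at h
      rw [hyi, hyv, htk]; ring
  ext i
  rw [mem_U_iff, f_eq_xor f hf, ne_xor_iff]
  have h := key i
  have hstep : step f S i = e (f i false) + e (decide (i ∈ S)) := rfl
  have hfin : e (y i) + e (y (i - 1)) + e (f i false) = e (decide (i ∈ S)) := by
    linear_combination h + hstep + two_z (e (y (i - 1))) + two_z (e (f i false))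
  rw [hfin]
  by_cases hm : i ∈ S <;> simp [hm, e]

end NCaux

/-- in a negative circuit of size `n`, there are exactly `2n`
configurations of minimal `u`-value `1`, and every configuration satisfies
`u x ≥ 1` (so there is no fixed point). -/
theorem negative_circuit_minimal_configurations
    (n : ℕ) [NeZero n] (f : ZMod n → Bool → Bool)
    (hf : ∀ i, f i = id ∨ f i = fun b => !b)
    (hneg : Odd (univ.filter (fun i : ZMod n => f i = fun b => !b)).card) :
    (univ.filter (fun x : ZMod n → Bool => (U f x).card = 1)).card = 2 * n ∧
    ∀ x : ZMod n → Bool, 1 ≤ (U f x).card := by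
  constructor
  · have htfilter : (univ.filter fun S : Finset (ZMod n) => S.card = 1)
        = Finset.powersetCard 1 (univ : Finset (ZMod n)) := by
      rw [Finset.powersetCard_eq_filter, Finset.powerset_univ]
    have htcard : ((univ : Finset Bool) ×ˢ (univ.filter fun S : Finset (ZMod n) => S.card = 1)).card
        = 2 * n := by
      rw [Finset.card_product, htfilter, Finset.card_powersetCard, card_univ, card_univ,
        ZMod.card, Fintype.card_bool, Nat.choose_one_right]
    rw [← htcard]
    apply Finset.card_bij (fun x _ => (x 0, U f x))
    · intro a ha
      rw [Finset.mem_product]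
      exact ⟨mem_univ _, mem_filter.mpr ⟨mem_univ _, (mem_filter.mp ha).2⟩⟩
    · intro a1 h1 a2 h2 h
      rw [Prod.mk.injEq] at h
      exact NCaux.det f hf a1 a2 h.1 h.2
    · rintro ⟨b, S⟩ hp
      rw [Finset.mem_product, mem_filter] at hp
      have hS : S.card = 1 := hp.2.2
      have hodd : Odd S.card := hS ▸ odd_one
      refine ⟨NCaux.build f S b, mem_filter.mpr ⟨mem_univ _, ?_⟩, ?_⟩
      · rw [NCaux.U_build f hf hneg S hodd]; exact hS
      · rw [Prod.mk.injEq]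
        exact ⟨NCaux.build_zero f S b, NCaux.U_build f hf hneg S hodd b⟩
  · intro x
    exact (NCaux.card_U_odd f hf hneg x).pos
end
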